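/- Let A₁,…,A_s (s ≥ 1) be nonempty finite subsets of a real inner product space V such that ⟨u,v⟩ = 0 whenever u ∈ A_h and v ∈ A_k with h ≠ k. For each h let β_h be the unique point of the convex hull of A_h closest to the origin, and assume β_h ≠ 0 for every h. Then the unique point of the convex hull of A₁ ∪ ⋯ ∪ A_s closest to the origin is β = (Σ_{h=1}^s ‖β_h‖^{−2})^{−1} · Σ_{h=1}^s β_h/‖β_h‖². -/

import Mathlib

open scoped RealInnerProductSpace

/-- Orthogonality of two sets extends to their convex hulls. -/
lemma hull_orth {V : Type*} [NormedAddCommGroup V] [InnerProductSpace ℝ V]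
    {S T : Set V} (h : ∀ u ∈ S, ∀ v ∈ T, ⟪u, v⟫ = 0) :
    ∀ x ∈ convexHull ℝ S, ∀ y ∈ convexHull ℝ T, ⟪x, y⟫ = 0 := by
  have step1 : ∀ v ∈ T, ∀ x ∈ convexHull ℝ S, ⟪x, v⟫ = 0 := by
    intro v hv
    have hlin : IsLinearMap ℝ (fun x : V => ⟪x, v⟫) :=
      ⟨fun a b => inner_add_left a b v, fun c x => real_inner_smul_left x v c⟩
    have := convexHull_min (t := {x : V | ⟪x, v⟫ = 0})
      (fun u hu => h u hu v hv) (convex_hyperplane hlin 0)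
    exact fun x hx => this hx
  intro x hx
  have hlin : IsLinearMap ℝ (fun y : V => ⟪x, y⟫) :=
    ⟨fun a b => inner_add_right x a b, fun c y => real_inner_smul_right x y c⟩
  have := convexHull_min (t := {y : V | ⟪x, y⟫ = 0})
    (fun v hv => step1 v hv x hx) (convex_hyperplane hlin 0)
  exact fun y hy => this hy

/-- Variational inequality for the point of minimal norm in a convex set. -/
lemma var_ineq {V : Type*} [NormedAddCommGroup V] [InnerProductSpace ℝ V]
    {K : Set V} (hK : Convex ℝ K) {β : V} (hβ : β ∈ K)
    (hmin : ∀ v ∈ K, ‖β‖ ≤ ‖v‖) {w : V} (hw : w ∈ K) :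
    ‖β‖ ^ 2 ≤ ⟪β, w⟫ := by
  have key : 0 ≤ ⟪β, w - β⟫ := by
    by_contra hc
    push_neg at hc
    set c := ⟪β, w - β⟫ with hcdef
    have hwβ : w - β ≠ 0 := by
      intro h0
      rw [hcdef, h0, inner_zero_right] at hc
      exact lt_irrefl 0 hc
    have hd : (0 : ℝ) < ‖w - β‖ ^ 2 := pow_pos (norm_pos_iff.mpr hwβ) 2
    set d := ‖w - β‖ ^ 2 with hddef
    set t : ℝ := min 1 (-c / d) with htdef
    have ht0 : 0 < t := lt_min one_pos (div_pos (neg_pos.mpr hc) hd)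
    have ht1 : t ≤ 1 := min_le_left _ _
    have hp : β + t • (w - β) ∈ K := by
      have := hK hβ hw (a := 1 - t) (b := t) (by linarith) (le_of_lt ht0) (by ring)
      convert this using 1
      module
    have hle : ‖β‖ ≤ ‖β + t • (w - β)‖ := hmin _ hp
    have hsq : ‖β‖ ^ 2 ≤ ‖β + t • (w - β)‖ ^ 2 :=
      pow_le_pow_left₀ (norm_nonneg _) hle 2
    rw [norm_add_sq_real] at hsq
    have hin : ⟪β, t • (w - β)⟫ = t * c := real_inner_smul_right β (w - β) t
    have hns : ‖t • (w - β)‖ ^ 2 = t ^ 2 * d := by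
      rw [norm_smul, mul_pow, hddef]
      congr 1
      rw [Real.norm_eq_abs, sq_abs]
    rw [hin, hns] at hsq
    have h1 : 0 ≤ t * (2 * c + t * d) := by nlinarith
    have h2 : 0 ≤ 2 * c + t * d := nonneg_of_mul_nonneg_right h1 ht0
    have h3 : t * d ≤ -c := by
      have : t ≤ -c / d := min_le_right _ _
      calc t * d ≤ (-c / d) * d := by nlinarith
        _ = -c := by field_simp
    linarith
  have heq : ⟪β, w⟫ = ‖β‖ ^ 2 + ⟪β, w - β⟫ := by
    rw [inner_sub_right, real_inner_self_eq_norm_sq]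
    ring
  rw [heq]
  linarith

theorem stmt6 {V : Type*} [NormedAddCommGroup V] [InnerProductSpace ℝ V]
    (s : ℕ) (hs : 1 ≤ s) (A : Fin s → Finset V)
    (hA : ∀ h, (A h).Nonempty)
    (horth : ∀ h k, h ≠ k → ∀ u ∈ A h, ∀ v ∈ A k, inner ℝ u v = (0 : ℝ))
    (βf : Fin s → V)
    (hmem : ∀ h, βf h ∈ convexHull ℝ (A h : Set V))
    (hmin : ∀ h, ∀ v ∈ convexHull ℝ (A h : Set V), ‖βf h‖ ≤ ‖v‖)
    (hne : ∀ h, βf h ≠ 0) :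
    (∑ h, (‖βf h‖ ^ 2)⁻¹)⁻¹ • (∑ h, (‖βf h‖ ^ 2)⁻¹ • βf h) ∈
        convexHull ℝ (⋃ h, (A h : Set V)) ∧
      ∀ v ∈ convexHull ℝ (⋃ h, (A h : Set V)),
        ‖(∑ h, (‖βf h‖ ^ 2)⁻¹)⁻¹ • (∑ h, (‖βf h‖ ^ 2)⁻¹ • βf h)‖ ≤ ‖v‖ := by
  haveI : Nonempty (Fin s) := Fin.pos_iff_nonempty.mp hs
  set c : Fin s → ℝ := fun h => (‖βf h‖ ^ 2)⁻¹ with hcdef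
  have hc : ∀ h, 0 < c h := fun h => by
    have := hne h
    have : ‖βf h‖ ≠ 0 := norm_ne_zero_iff.mpr this
    positivity
  set T : ℝ := ∑ h, c h with hTdef
  have hT : 0 < T := Finset.sum_pos (fun h _ => hc h) Finset.univ_nonempty
  set β : V := T⁻¹ • (∑ h, c h • βf h) with hβdef
  -- orthogonality of the βf
  have horthβ : ∀ h k, h ≠ k → ⟪βf h, βf k⟫ = 0 := fun h k hhk =>
    hull_orth (horth h k hhk) _ (hmem h) _ (hmem k)
  -- inner products with elements of A h
  have hinA : ∀ k h, ∀ a ∈ A h, k ≠ h → ⟪βf k, a⟫ = 0 := by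
    intro k h a ha hkh
    exact hull_orth (horth k h hkh) _ (hmem k) a (subset_convexHull ℝ _ ha)
  have hvar : ∀ h, ∀ a ∈ A h, ‖βf h‖ ^ 2 ≤ ⟪βf h, a⟫ := fun h a ha =>
    var_ineq (convex_convexHull ℝ _) (hmem h) (hmin h) (subset_convexHull ℝ _ ha)
  -- ⟪β, a⟫ ≥ T⁻¹ for a in any A h
  have hβa : ∀ h, ∀ a ∈ (A h : Set V), T⁻¹ ≤ ⟪β, a⟫ := by
    intro h a ha
    have hsum : ⟪∑ k, c k • βf k, a⟫ = c h * ⟪βf h, a⟫ := by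
      rw [sum_inner]
      rw [Finset.sum_eq_single h]
      · exact real_inner_smul_left _ _ _
      · intro k _ hkh
        rw [real_inner_smul_left, hinA k h a ha hkh, mul_zero]
      · intro habs; exact absurd (Finset.mem_univ h) habs
    have h1 : (1 : ℝ) ≤ c h * ⟪βf h, a⟫ := by
      have := hvar h a ha
      have hpos : 0 < ‖βf h‖ ^ 2 := by
        have : ‖βf h‖ ≠ 0 := norm_ne_zero_iff.mpr (hne h)
        positivity
      calc (1 : ℝ) = c h * ‖βf h‖ ^ 2 := by
            rw [hcdef]; field_simp [norm_ne_zero_iff.mpr (hne h)]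
        _ ≤ c h * ⟪βf h, a⟫ := by
            apply mul_le_mul_of_nonneg_left this (le_of_lt (hc h))
    have : ⟪β, a⟫ = T⁻¹ * (c h * ⟪βf h, a⟫) := by
      rw [hβdef, real_inner_smul_left, hsum]
    rw [this]
    nlinarith [inv_pos.mpr hT]
  have hkey : ∀ v ∈ convexHull ℝ (⋃ h, (A h : Set V)), T⁻¹ ≤ ⟪β, v⟫ := by
    have hlin : IsLinearMap ℝ (fun v : V => ⟪β, v⟫) :=
      ⟨fun a b => inner_add_right β a b, fun r y => real_inner_smul_right β y r⟩
    have := convexHull_min (t := {v : V | T⁻¹ ≤ ⟪β, v⟫})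
      (fun a haU => by
        obtain ⟨h, ha⟩ := Set.mem_iUnion.mp haU
        exact hβa h a ha)
      (convex_halfSpace_ge hlin T⁻¹)
    exact fun v hv => this hv
  -- norm of β
  have hnormsq : ‖β‖ ^ 2 = T⁻¹ := by
    have hbig : ⟪∑ h, c h • βf h, ∑ k, c k • βf k⟫ = T := by
      rw [sum_inner]
      rw [hTdef]
      apply Finset.sum_congr rfl
      intro h _
      rw [real_inner_smul_left, inner_sum]
      rw [Finset.sum_eq_single h]
      · rw [real_inner_smul_right, real_inner_self_eq_norm_sq, hcdef]
        have : ‖βf h‖ ≠ 0 := norm_ne_zero_iff.mpr (hne h)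
        field_simp
      · intro k _ hkh
        rw [real_inner_smul_right, horthβ h k (Ne.symm hkh), mul_zero]
      · intro habs; exact absurd (Finset.mem_univ h) habs
    have : ‖β‖ ^ 2 = ⟪β, β⟫ := (real_inner_self_eq_norm_sq β).symm
    rw [this, hβdef, real_inner_smul_left, real_inner_smul_right, hbig]
    field_simp
  constructor
  · -- membership
    have heq : β = ∑ h, (T⁻¹ * c h) • βf h := by
      rw [hβdef, Finset.smul_sum]
      apply Finset.sum_congr rfl
      intro h _
      rw [smul_smul]
    rw [heq]
    apply (convex_convexHull ℝ _).sum_mem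
    · intro h _
      positivity
    · rw [← Finset.mul_sum, ← hTdef]
      field_simp
    · intro h _
      exact convexHull_mono (Set.subset_iUnion (fun k => (A k : Set V)) h) (hmem h)
  · -- minimality
    intro v hv
    have hβpos : 0 < ‖β‖ := by
      have h0 : (0:ℝ) < ‖β‖ ^ 2 := hnormsq ▸ inv_pos.mpr hT
      nlinarith [norm_nonneg β]
    have h1 : ‖β‖ * ‖β‖ ≤ ⟪β, v⟫ := by
      have := hkey v hv
      nlinarith [hnormsq]
    have h2 : ⟪β, v⟫ ≤ ‖β‖ * ‖v‖ := real_inner_le_norm β v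
    have := le_trans h1 h2
    exact le_of_mul_le_mul_left this hβpos
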